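/- Under the standing assumptions, let c be a codeword of C_{n−1}(n,q) with wt(c) ≤ W(n,q). If |P_c^∞| ≤ |ℍ_c^∞| − 2, then c is not a minimal codeword. -/

import Mathlib

open Module

noncomputable section

/-- `pgTheta q m = 1 + q + … + q^m` for `m ≥ 0`, and `0` for `m < 0`. -/
def pgTheta (q : ℕ) (m : ℤ) : ℤ := ∑ i ∈ Finset.range (m + 1).toNat, (q : ℤ) ^ i

/-- `q^j`, truncated to `0` for negative exponents `j`. -/
def pgQpow (q : ℕ) (j : ℤ) : ℤ := if j < 0 then 0 else (q : ℤ) ^ j.toNat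

/-- `Δ_{i,q}` where `q = p^h`: `⌊√q / 2^(i-2)⌋` if `h > 2`, and `⌊p / 2^i⌋` if `h = 2`. -/
noncomputable def pgDelta (p h : ℕ) (i : ℤ) : ℤ :=
  if 2 < h then ⌊Real.sqrt ((p : ℝ) ^ h) / (2 : ℝ) ^ (i - 2)⌋
  else ⌊(p : ℝ) / (2 : ℝ) ^ i⌋

/-- `W(i,q) = (Δ_{i,q} - 1)·θ_{i-1}`. -/
noncomputable def pgW (p h : ℕ) (i : ℤ) : ℤ := (pgDelta p h i - 1) * pgTheta (p ^ h) (i - 1)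

/-- `U(n,i,q) = q^i − (Δ_{n,q} − 2)·⌊q^(i−1)⌋ − (i−2)·((q−1)·Δ_{n,q} + 1)·⌊q^(i−3)⌋ + θ_{i−3}`. -/
noncomputable def pgU (p h n : ℕ) (i : ℤ) : ℤ :=
  pgQpow (p ^ h) i - (pgDelta p h n - 2) * pgQpow (p ^ h) (i - 1)
    - (i - 2) * ((((p ^ h : ℕ) : ℤ) - 1) * pgDelta p h n + 1) * pgQpow (p ^ h) (i - 3)
    + pgTheta (p ^ h) (i - 3)

/-- `⌈w / θ_m⌉` as a natural number. -/
noncomputable def pgCeil (q w : ℕ) (m : ℤ) : ℕ := (⌈(w : ℚ) / ((pgTheta q m : ℤ) : ℚ)⌉).toNat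
open scoped Classical

/-- A point of `PG(n,q)`: a 1-dimensional subspace of `F^(n+1)`. -/
abbrev PGPoint (F : Type) [Field F] (n : ℕ) :=
  {P : Submodule F (Fin (n + 1) → F) // finrank F P = 1}

/-- The indicator function of a subspace `κ`, with values in `ZMod p`. -/
noncomputable def pgInd (p : ℕ) (F : Type) [Field F] (n : ℕ)
    (κ : Submodule F (Fin (n + 1) → F)) : PGPoint F n → ZMod p :=
  fun P => if P.1 ≤ κ then 1 else 0

/-- The code `C_{n-1}(n,q)`: the `ZMod p`-span of the indicator functions of all
hyperplanes (i.e. `n`-dimensional subspaces of `F^(n+1)`). -/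
noncomputable def pgCode (p : ℕ) (F : Type) [Field F] (n : ℕ) :
    Submodule (ZMod p) (PGPoint F n → ZMod p) :=
  Submodule.span (ZMod p)
    {f | ∃ H : Submodule F (Fin (n + 1) → F), finrank F H = n ∧ f = pgInd p F n H}

/-- The weight of a codeword: the number of points where it is nonzero. -/
noncomputable def pgWt (p : ℕ) (F : Type) [Field F] (n : ℕ)
    (c : PGPoint F n → ZMod p) : ℕ :=
  Set.ncard {P : PGPoint F n | c P ≠ 0}

/-- The number of points of `supp c` lying in the subspace `κ`. -/
noncomputable def pgSecant (p : ℕ) (F : Type) [Field F] (n : ℕ)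
    (c : PGPoint F n → ZMod p) (κ : Submodule F (Fin (n + 1) → F)) : ℕ :=
  Set.ncard {P : PGPoint F n | c P ≠ 0 ∧ P.1 ≤ κ}

/-- A codeword `c` is minimal if every codeword whose support is contained in the
support of `c` is a scalar multiple of `c`. -/
noncomputable def pgMinimal (p : ℕ) (F : Type) [Field F] (n : ℕ)
    (c : PGPoint F n → ZMod p) : Prop :=
  ∀ c' ∈ pgCode p F n, {P : PGPoint F n | c' P ≠ 0} ⊆ {P : PGPoint F n | c P ≠ 0} →
    ∃ α : ZMod p, c' = α • c

/-- The restriction `c restricted to 𝓗 = Σ_{H ∈ 𝓗} α(H)·f_H` of a codeword to a set of hyperplanes,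
given the coefficient function `α`. -/
noncomputable def pgRes (p : ℕ) (F : Type) [Field F] (n : ℕ)
    (α : Submodule F (Fin (n + 1) → F) → ZMod p)
    (A : Finset (Submodule F (Fin (n + 1) → F))) : PGPoint F n → ZMod p :=
  fun P => ∑ H ∈ A, α H * pgInd p F n H P

/-- The graph `Γ_ℙ` associated with a partition `ℙ` of the hyperplane set of `c`:
two distinct parts are adjacent iff some hole of `c` is in the support of the
restrictions of `c` to both parts and of no other part. -/
noncomputable def pgGraph (p : ℕ) (F : Type) [Field F] (n : ℕ)
    (c : PGPoint F n → ZMod p)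
    (α : Submodule F (Fin (n + 1) → F) → ZMod p)
    (P : Finset (Finset (Submodule F (Fin (n + 1) → F)))) :
    SimpleGraph (Finset (Submodule F (Fin (n + 1) → F))) where
  Adj A B := A ∈ P ∧ B ∈ P ∧ A ≠ B ∧ ∃ Q : PGPoint F n,
    c Q = 0 ∧ pgRes p F n α A Q ≠ 0 ∧ pgRes p F n α B Q ≠ 0 ∧
    ∀ C ∈ P, C ≠ A → C ≠ B → pgRes p F n α C Q = 0
  symm := by
    constructor
    rintro A B ⟨hA, hB, hne, Q, h0, h1, h2, h3⟩
    exact ⟨hB, hA, hne.symm, Q, h0, h2, h1, fun C hC hCB hCA => h3 C hC hCA hCB⟩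
  loopless := by
    constructor
    rintro A ⟨-, -, hne, -⟩
    exact hne rfl

/-- One coarsening step: replace a partition by the partition whose parts are the
unions of the parts lying in a common connected component of `Γ_ℙ`. -/
noncomputable def pgNext (p : ℕ) (F : Type) [Field F] (n : ℕ)
    (c : PGPoint F n → ZMod p)
    (α : Submodule F (Fin (n + 1) → F) → ZMod p)
    (P : Finset (Finset (Submodule F (Fin (n + 1) → F)))) :
    Finset (Finset (Submodule F (Fin (n + 1) → F))) :=
  P.image (fun A => (P.filter (fun B => (pgGraph p F n c α P).Reachable A B)).sup id)

/-- The sequence of partitions `ℙ^0, ℙ^1, ℙ^2, …`, starting from the partition of the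
hyperplane set `S` into singletons; it stabilizes at the partition `ℍ_c^∞`. -/
noncomputable def pgSeq (p : ℕ) (F : Type) [Field F] (n : ℕ)
    (c : PGPoint F n → ZMod p)
    (α : Submodule F (Fin (n + 1) → F) → ZMod p)
    (S : Finset (Submodule F (Fin (n + 1) → F))) :
    ℕ → Finset (Finset (Submodule F (Fin (n + 1) → F)))
  | 0 => S.image (fun H => {H})
  | (i + 1) => pgNext p F n c α (pgSeq p F n c α S i)

/-- `P_c^∞`: the set of holes of `c` at which the restriction of `c` to some part of
the stabilized partition is nonzero. -/
noncomputable def pgPinf (p : ℕ) (F : Type) [Field F] (n : ℕ)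
    (c : PGPoint F n → ZMod p)
    (α : Submodule F (Fin (n + 1) → F) → ZMod p)
    (Hinf : Finset (Finset (Submodule F (Fin (n + 1) → F)))) : Set (PGPoint F n) :=
  {Q | c Q = 0 ∧ ∃ A ∈ Hinf, pgRes p F n α A Q ≠ 0}

section PGAux

variable {p : ℕ} {F : Type} [Field F] {n : ℕ}

/-- Invariant: parts are nonempty subsets of `S`, pairwise disjoint. -/
def pgGood (S : Finset (Submodule F (Fin (n + 1) → F)))
    (P : Finset (Finset (Submodule F (Fin (n + 1) → F)))) : Prop :=
  (∀ A ∈ P, A.Nonempty ∧ A ⊆ S) ∧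
  (∀ A ∈ P, ∀ B ∈ P, A ≠ B → ∀ H ∈ A, H ∉ B)

lemma pgGood_next (p : ℕ) (F : Type) [Field F] (n : ℕ) (c : PGPoint F n → ZMod p)
    (α : Submodule F (Fin (n + 1) → F) → ZMod p)
    (S : Finset (Submodule F (Fin (n + 1) → F)))
    (P : Finset (Finset (Submodule F (Fin (n + 1) → F))))
    (hP : pgGood S P) : pgGood S (pgNext p F n c α P) := by
  classical
  set G := pgGraph p F n c α P with hG
  have hclsmem : ∀ A ∈ P, A ∈ P.filter (fun B => G.Reachable A B) := by
    intro A hA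
    exact Finset.mem_filter.mpr ⟨hA, SimpleGraph.Reachable.refl A⟩
  have hreach_mem : ∀ {A B : Finset (Submodule F (Fin (n + 1) → F))},
      B ∈ P.filter (fun B => G.Reachable A B) → B ∈ P ∧ G.Reachable A B := by
    intro A B hB
    simpa [Finset.mem_filter] using hB
  have hclseq : ∀ A A', G.Reachable A A' →
      P.filter (fun B => G.Reachable A B) = P.filter (fun B => G.Reachable A' B) := by
    intro A A' hr
    ext B
    simp only [Finset.mem_filter, and_congr_right_iff]
    exact fun _ => ⟨fun hab => hr.symm.trans hab, fun hab => hr.trans hab⟩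
  constructor
  · intro X hX
    obtain ⟨A, hA, rfl⟩ := Finset.mem_image.mp hX
    constructor
    · exact ((hP.1 A hA).1).mono (Finset.le_sup (f := id) (hclsmem A hA))
    · intro H hH
      obtain ⟨B, hB, hHB⟩ := Finset.mem_sup.mp hH
      exact (hP.1 B (hreach_mem hB).1).2 hHB
  · intro X hX Y hY hXY H hHX hHY
    obtain ⟨A, hA, rfl⟩ := Finset.mem_image.mp hX
    obtain ⟨A', hA', rfl⟩ := Finset.mem_image.mp hY
    obtain ⟨B, hB, hHB⟩ := Finset.mem_sup.mp hHX
    obtain ⟨B', hB', hHB'⟩ := Finset.mem_sup.mp hHY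
    obtain ⟨hBP, hrB⟩ := hreach_mem hB
    obtain ⟨hB'P, hrB'⟩ := hreach_mem hB'
    have hBB' : B = B' := by
      by_contra hne
      exact hP.2 B hBP B' hB'P hne H hHB hHB'
    subst hBB'
    exact hXY (by rw [hclseq A A' (hrB.trans hrB'.symm)])

lemma pgGood_seq (p : ℕ) (F : Type) [Field F] (n : ℕ) (c : PGPoint F n → ZMod p)
    (α : Submodule F (Fin (n + 1) → F) → ZMod p)
    (S : Finset (Submodule F (Fin (n + 1) → F))) (j : ℕ) :
    pgGood S (pgSeq p F n c α S j) := by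
  induction j with
  | zero =>
    constructor
    · intro A hA
      obtain ⟨H, hH, rfl⟩ := Finset.mem_image.mp hA
      exact ⟨⟨H, Finset.mem_singleton_self H⟩, Finset.singleton_subset_iff.mpr hH⟩
    · intro A hA B hB hAB H hHA hHB
      obtain ⟨H1, h1, rfl⟩ := Finset.mem_image.mp hA
      obtain ⟨H2, h2, rfl⟩ := Finset.mem_image.mp hB
      rw [Finset.mem_singleton] at hHA hHB
      subst hHA
      subst hHB
      exact hAB rfl
  | succ j ih => exact pgGood_next p F n c α S _ ih

lemma pg_avoid (F : Type) [Field F] [Fintype F] (N n : ℕ) (hn : 2 ≤ n)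
    (H0 : Submodule F (Fin N → F)) (hH0 : Module.finrank F H0 = n)
    (T : Finset (Submodule F (Fin N → F))) (hT : ∀ H ∈ T, Module.finrank F H = n)
    (hH0T : H0 ∉ T) (hcard : T.card + 2 ≤ Fintype.card F) :
    ∃ v : Fin N → F, v ∈ H0 ∧ v ≠ 0 ∧ ∀ H ∈ T, v ∉ H := by
  classical
  by_contra hcon
  push_neg at hcon
  set q : ℕ := Fintype.card F with hq
  have hq1 : 1 < q := Fintype.one_lt_card
  have hcardW : ∀ W : Submodule F (Fin N → F),
      (W : Set (Fin N → F)).toFinset.card = q ^ (Module.finrank F W) := by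
    intro W
    rw [Set.toFinset_card]
    exact card_eq_pow_finrank (K := F) (V := ↥W)
  have hsub : (H0 : Set (Fin N → F)).toFinset ⊆
      insert 0 (T.biUnion fun H =>
        ((H0 ⊓ H : Submodule F (Fin N → F)) : Set (Fin N → F)).toFinset) := by
    intro v hv
    rw [Set.mem_toFinset] at hv
    by_cases hv0 : v = (0 : Fin N → F)
    · simp [hv0]
    · obtain ⟨H, hHT, hvH⟩ := hcon v hv hv0
      refine Finset.mem_insert_of_mem (Finset.mem_biUnion.mpr ⟨H, hHT, ?_⟩)
      rw [Set.mem_toFinset]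
      exact Submodule.mem_inf.mpr ⟨hv, hvH⟩
  have hsmall : ∀ H ∈ T,
      ((H0 ⊓ H : Submodule F (Fin N → F)) : Set (Fin N → F)).toFinset.card ≤ q ^ (n - 1) := by
    intro H hHT
    rw [hcardW]
    have hlt : H0 ⊓ H < H0 := by
      refine lt_of_le_of_ne inf_le_left (fun he => hH0T ?_)
      have hle : H0 ≤ H := he ▸ inf_le_right
      have : H0 = H := Submodule.eq_of_le_of_finrank_le hle (by rw [hT H hHT, hH0])
      exact this ▸ hHT
    have hfr : Module.finrank F ↥(H0 ⊓ H) < n := by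
      have := Submodule.finrank_lt_finrank_of_lt hlt
      omega
    exact Nat.pow_le_pow_right (by omega) (by omega)
  have hchain : q ^ n ≤ 1 + T.card * q ^ (n - 1) := by
    calc q ^ n = (H0 : Set (Fin N → F)).toFinset.card := by rw [hcardW, hH0]
      _ ≤ _ := Finset.card_le_card hsub
      _ ≤ 1 + (T.biUnion fun H =>
            ((H0 ⊓ H : Submodule F (Fin N → F)) : Set (Fin N → F)).toFinset).card := by
          have := Finset.card_insert_le (0 : Fin N → F) (T.biUnion fun H =>
            ((H0 ⊓ H : Submodule F (Fin N → F)) : Set (Fin N → F)).toFinset)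
          omega
      _ ≤ 1 + ∑ H ∈ T,
            ((H0 ⊓ H : Submodule F (Fin N → F)) : Set (Fin N → F)).toFinset.card := by
          have := Finset.card_biUnion_le (s := T) (t := fun H =>
            ((H0 ⊓ H : Submodule F (Fin N → F)) : Set (Fin N → F)).toFinset)
          omega
      _ ≤ 1 + ∑ _H ∈ T, q ^ (n - 1) := by
          gcongr with H hH
          exact hsmall H hH
      _ = 1 + T.card * q ^ (n - 1) := by rw [Finset.sum_const, smul_eq_mul]
  have hQ : q ≤ q ^ (n - 1) := by
    calc q = q ^ 1 := (pow_one q).symm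
    _ ≤ q ^ (n - 1) := Nat.pow_le_pow_right (by omega) (by omega)
  have hqn : q ^ n = q ^ (n - 1) * q := by
    rw [← pow_succ]
    congr 1
    omega
  nlinarith [hchain, hQ, hqn, hcard]

end PGAux
/-- Theorem: if `|P_c^∞| ≤ |ℍ_c^∞| − 2`, then `c` is not a minimal codeword. -/
theorem statement_11 (p h n : ℕ) (hp : p.Prime) (hh : 2 ≤ h) (hn : 2 ≤ n)
    (hq27 : 27 < p ^ h)
    (hq1 : 2 < h → max 32 (2 ^ (2 * n - 4)) ≤ p ^ h)
    (hq2 : h = 2 → 2 ^ (2 * n) ≤ p ^ h)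
    (F : Type) [Field F] [Fintype F] (hF : Fintype.card F = p ^ h)
    (c : PGPoint F n → ZMod p) (hc : c ∈ pgCode p F n)
    (hwt : (pgWt p F n c : ℤ) ≤ pgW p h n)
    (S : Finset (Submodule F (Fin (n + 1) → F)))
    (hScard : S.card = pgCeil (p ^ h) (pgWt p F n c) ((n : ℤ) - 1))
    (hShyp : ∀ H ∈ S, finrank F H = n)
    (α : Submodule F (Fin (n + 1) → F) → ZMod p)
    (hα : ∀ H ∈ S, α H ≠ 0)
    (hrep : c = fun P => ∑ H ∈ S, α H * pgInd p F n H P)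
    (j : ℕ)
    (hstab : pgSeq p F n c α S (j + 1) = pgSeq p F n c α S j)
    (hsmall : (pgPinf p F n c α (pgSeq p F n c α S j)).ncard + 2 ≤
      (pgSeq p F n c α S j).card) :
    ¬ pgMinimal p F n c := by
  classical
  haveI : Fact p.Prime := ⟨hp⟩
  haveI : Finite (Submodule F (Fin (n + 1) → F)) :=
    Finite.of_injective (fun W => (W : Set (Fin (n + 1) → F))) SetLike.coe_injective
  intro hmin
  set Hinf := pgSeq p F n c α S j with hHinfdef
  obtain ⟨hgood1, hgood2⟩ := pgGood_seq p F n c α S j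
  have hPfin : (pgPinf p F n c α Hinf).Finite := Set.toFinite _
  set tP := hPfin.toFinset with htPdef
  -- the linear map whose kernel consists of admissible coefficient modifications
  set Φ : (↥Hinf → ZMod p) →ₗ[ZMod p] (↥tP → ZMod p) :=
    { toFun := fun lam Q => ∑ A : ↥Hinf, lam A * pgRes p F n α A.1 Q.1
      map_add' := by
        intro x y
        funext Q
        simp [add_mul, Finset.sum_add_distrib]
      map_smul' := by
        intro a x
        funext Q
        simp [Finset.mul_sum, mul_assoc] } with hΦdef
  have hker : 2 ≤ Module.finrank (ZMod p) (LinearMap.ker Φ) := by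
    have h1 := LinearMap.finrank_range_add_finrank_ker Φ
    have h2 : Module.finrank (ZMod p) (LinearMap.range Φ) ≤ tP.card := by
      have h := Submodule.finrank_le (LinearMap.range Φ)
      simpa [Module.finrank_pi, Fintype.card_coe] using h
    have h3 : Module.finrank (ZMod p) (↥Hinf → ZMod p) = Hinf.card := by
      simp [Module.finrank_pi, Fintype.card_coe]
    have h4 : tP.card = (pgPinf p F n c α Hinf).ncard :=
      (Set.ncard_eq_toFinset_card _ hPfin).symm
    omega
  obtain ⟨lam, hlamker, hlamspan⟩ : ∃ lam ∈ LinearMap.ker Φ,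
      lam ∉ Submodule.span (ZMod p) {(fun _ => 1 : ↥Hinf → ZMod p)} := by
    by_contra hcon
    push_neg at hcon
    have hle : LinearMap.ker Φ ≤ Submodule.span (ZMod p) {(fun _ => 1 : ↥Hinf → ZMod p)} :=
      fun x hx => hcon x hx
    have hmono := Submodule.finrank_mono hle
    have hspan : Module.finrank (ZMod p)
        (Submodule.span (ZMod p) {(fun _ => 1 : ↥Hinf → ZMod p)}) ≤ 1 := by
      by_cases h1 : (fun _ => 1 : ↥Hinf → ZMod p) = 0
      · rw [h1]
        rw [Submodule.span_zero_singleton]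
        simp
      · rw [finrank_span_singleton h1]
    omega
  -- the modified codeword
  set d : PGPoint F n → ZMod p := fun P => ∑ A : ↥Hinf, lam A * pgRes p F n α A.1 P with hd
  have hres_mem : ∀ A : ↥Hinf, pgRes p F n α A.1 ∈ pgCode p F n := by
    intro A
    have he : pgRes p F n α A.1 = ∑ H ∈ A.1, α H • pgInd p F n H := by
      funext P
      simp [pgRes, Finset.sum_apply]
    rw [he]
    refine Submodule.sum_mem _ fun H hH => Submodule.smul_mem _ _ ?_
    exact Submodule.subset_span ⟨H, hShyp H ((hgood1 A.1 A.2).2 hH), rfl⟩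
  have hdcode : d ∈ pgCode p F n := by
    have he : d = ∑ A : ↥Hinf, lam A • pgRes p F n α A.1 := by
      funext P
      simp [hd, Finset.sum_apply]
    rw [he]
    exact Submodule.sum_mem _ fun A _ => Submodule.smul_mem _ _ (hres_mem A)
  have hdsupp : {P : PGPoint F n | d P ≠ 0} ⊆ {P : PGPoint F n | c P ≠ 0} := by
    intro Q hQ
    simp only [Set.mem_setOf_eq] at hQ ⊢
    intro hcQ
    apply hQ
    by_cases hex : ∃ A ∈ Hinf, pgRes p F n α A Q ≠ 0
    · have hQP : Q ∈ pgPinf p F n c α Hinf := ⟨hcQ, hex⟩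
      have hQtP : Q ∈ tP := hPfin.mem_toFinset.mpr hQP
      have hz := congrFun (LinearMap.mem_ker.mp hlamker) (⟨Q, hQtP⟩ : ↥tP)
      simpa [hΦdef, hd] using hz
    · push_neg at hex
      rw [hd]
      refine Finset.sum_eq_zero fun A _ => ?_
      rw [hex A.1 A.2, mul_zero]
  obtain ⟨α0, hα0⟩ := hmin d hdcode hdsupp
  obtain ⟨A0, hA0ne⟩ : ∃ A0 : ↥Hinf, lam A0 ≠ α0 := by
    by_contra hcon
    push_neg at hcon
    exact hlamspan (Submodule.mem_span_singleton.mpr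
      ⟨α0, by funext A; simp [hcon A]⟩)
  obtain ⟨H0, hH0A0⟩ := (hgood1 A0.1 A0.2).1
  have hH0S : H0 ∈ S := (hgood1 A0.1 A0.2).2 hH0A0
  -- bound on |S|
  have hq0 : (0 : ℤ) < (p ^ h : ℕ) := by exact_mod_cast (by omega : 0 < p ^ h)
  have hθpos : 0 < pgTheta (p ^ h) ((n : ℤ) - 1) := by
    rw [pgTheta]
    have hto : ((n : ℤ) - 1 + 1).toNat = n := by omega
    rw [hto]
    exact Finset.sum_pos (fun i _ => pow_pos hq0 i)
      (Finset.nonempty_range_iff.mpr (by omega))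
  have hceil : (⌈(pgWt p F n c : ℚ) / ((pgTheta (p ^ h) ((n : ℤ) - 1) : ℤ) : ℚ)⌉ : ℤ)
      ≤ pgDelta p h n - 1 := by
    rw [Int.ceil_le]
    rw [div_le_iff₀ (by exact_mod_cast hθpos)]
    have hwt' : (pgWt p F n c : ℤ) ≤ (pgDelta p h n - 1) * pgTheta (p ^ h) ((n : ℤ) - 1) := hwt
    exact_mod_cast hwt'
  have hD1 : 0 ≤ pgDelta p h n - 1 := by
    by_contra hD
    push_neg at hD
    have : (pgDelta p h n - 1) * pgTheta (p ^ h) ((n : ℤ) - 1) < 0 :=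
      mul_neg_of_neg_of_pos (by omega) hθpos
    have hwt0 : (0 : ℤ) ≤ (pgWt p F n c : ℤ) := Int.natCast_nonneg _
    have := hwt
    rw [pgW] at this
    omega
  have hScard_le : (S.card : ℤ) ≤ pgDelta p h n - 1 := by
    rw [hScard, pgCeil]
    calc ((⌈(pgWt p F n c : ℚ) / ((pgTheta (p ^ h) ((n : ℤ) - 1) : ℤ) : ℚ)⌉).toNat : ℤ)
        ≤ ((pgDelta p h n - 1).toNat : ℤ) := by
          exact_mod_cast Int.toNat_le_toNat hceil
      _ = pgDelta p h n - 1 := Int.toNat_of_nonneg hD1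
  have hDelta_le : pgDelta p h n ≤ ((p ^ h : ℕ) : ℤ) := by
    rw [pgDelta]
    by_cases h3 : 2 < h
    · rw [if_pos h3]
      have h2e : (1 : ℝ) ≤ (2 : ℝ) ^ ((n : ℤ) - 2) := by
        obtain ⟨k, hk⟩ : ∃ k : ℕ, (n : ℤ) - 2 = k := ⟨n - 2, by omega⟩
        rw [hk, zpow_natCast]
        exact one_le_pow₀ (by norm_num)
      have hq1R : (1 : ℝ) ≤ ((p ^ h : ℕ) : ℝ) := by
        exact_mod_cast (by omega : 1 ≤ p ^ h)
      have hx : Real.sqrt ((p : ℝ) ^ h) / (2 : ℝ) ^ ((n : ℤ) - 2) ≤ ((p ^ h : ℕ) : ℝ) := by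
        have h1 : Real.sqrt ((p : ℝ) ^ h) ≤ ((p ^ h : ℕ) : ℝ) := by
          rw [Real.sqrt_le_left (by positivity)]
          have he : ((p : ℝ)) ^ h = ((p ^ h : ℕ) : ℝ) := by push_cast; ring
          rw [he]
          nlinarith
        exact le_trans (div_le_self (Real.sqrt_nonneg _) h2e) h1
      calc ⌊Real.sqrt ((p : ℝ) ^ h) / (2 : ℝ) ^ ((n : ℤ) - 2)⌋ ≤ ⌊((p ^ h : ℕ) : ℝ)⌋ :=
            Int.floor_le_floor hx
        _ = ((p ^ h : ℕ) : ℤ) := Int.floor_natCast _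
    · rw [if_neg h3]
      have h2e : (1 : ℝ) ≤ (2 : ℝ) ^ (n : ℤ) := by
        rw [zpow_natCast]
        exact one_le_pow₀ (by norm_num)
      have hp2 : (p : ℝ) ≤ ((p ^ h : ℕ) : ℝ) := by
        exact_mod_cast Nat.le_self_pow (by omega) p
      have hx : (p : ℝ) / (2 : ℝ) ^ (n : ℤ) ≤ ((p ^ h : ℕ) : ℝ) :=
        le_trans (div_le_self (by positivity) h2e) hp2
      calc ⌊(p : ℝ) / (2 : ℝ) ^ (n : ℤ)⌋ ≤ ⌊((p ^ h : ℕ) : ℝ)⌋ := Int.floor_le_floor hx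
        _ = ((p ^ h : ℕ) : ℤ) := Int.floor_natCast _
  have hcards : (S.erase H0).card + 2 ≤ Fintype.card F := by
    rw [hF, Finset.card_erase_of_mem hH0S]
    have hS1 : 1 ≤ S.card := Finset.card_pos.mpr ⟨H0, hH0S⟩
    have h6 : (S.card : ℤ) ≤ ((p ^ h : ℕ) : ℤ) - 1 := by omega
    have h7 : S.card + 1 ≤ p ^ h := by exact_mod_cast (by omega : (S.card : ℤ) + 1 ≤ ((p ^ h : ℕ) : ℤ))
    omega
  obtain ⟨v, hvH0, hv0, hvT⟩ := pg_avoid F (n + 1) n hn H0 (hShyp H0 hH0S) (S.erase H0)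
    (fun H hH => hShyp H (Finset.mem_of_mem_erase hH)) (Finset.notMem_erase H0 S) hcards
  set P0 : PGPoint F n := ⟨Submodule.span F {v}, finrank_span_singleton hv0⟩ with hP0def
  have hP0le : ∀ H : Submodule F (Fin (n + 1) → F), P0.1 ≤ H ↔ v ∈ H := fun H =>
    Submodule.span_singleton_le_iff_mem v H
  have hind : ∀ H ∈ S, pgInd p F n H P0 = if H = H0 then 1 else 0 := by
    intro H hHS
    by_cases hH : H = H0
    · subst hH
      rw [if_pos rfl, pgInd, if_pos ((hP0le H).mpr hvH0)]
    · have hnle : ¬ P0.1 ≤ H := fun hle =>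
        hvT H (Finset.mem_erase.mpr ⟨hH, hHS⟩) ((hP0le H).mp hle)
      rw [if_neg hH, pgInd, if_neg hnle]
  have hcP0 : c P0 = α H0 := by
    rw [hrep]
    show (∑ H ∈ S, α H * pgInd p F n H P0) = α H0
    rw [Finset.sum_eq_single H0]
    · rw [hind H0 hH0S, if_pos rfl, mul_one]
    · intro H hHS hne
      rw [hind H hHS, if_neg hne, mul_zero]
    · intro habs
      exact absurd hH0S habs
  have hres0 : ∀ A : ↥Hinf, pgRes p F n α A.1 P0 = if H0 ∈ A.1 then α H0 else 0 := by
    intro A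
    rw [pgRes]
    by_cases hH0A : H0 ∈ A.1
    · rw [if_pos hH0A, Finset.sum_eq_single H0]
      · rw [hind H0 hH0S, if_pos rfl, mul_one]
      · intro H hHA hne
        rw [hind H ((hgood1 A.1 A.2).2 hHA), if_neg hne, mul_zero]
      · intro habs
        exact absurd hH0A habs
    · rw [if_neg hH0A]
      refine Finset.sum_eq_zero fun H hHA => ?_
      have hne : H ≠ H0 := fun he => hH0A (he ▸ hHA)
      rw [hind H ((hgood1 A.1 A.2).2 hHA), if_neg hne, mul_zero]
  have hdP0 : d P0 = lam A0 * α H0 := by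
    rw [hd]
    show (∑ A : ↥Hinf, lam A * pgRes p F n α A.1 P0) = lam A0 * α H0
    rw [Fintype.sum_eq_single A0]
    · rw [hres0 A0, if_pos hH0A0]
    · intro A hAne
      rw [hres0 A]
      have hnot : H0 ∉ A.1 := by
        intro hmem
        have hne : A0.1 ≠ A.1 := fun he => hAne (Subtype.ext he.symm)
        exact hgood2 A0.1 A0.2 A.1 A.2 hne H0 hH0A0 hmem
      rw [if_neg hnot, mul_zero]
  have hfin := congrFun hα0 P0
  rw [hdP0, Pi.smul_apply, smul_eq_mul, hcP0] at hfin
  exact hA0ne (mul_right_cancel₀ (hα H0 hH0S) hfin)
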